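/- Let A be a brace with abelian multiplicative group generated as a brace by a single element x. Then for every k ≥ 1, A^k = {x^{*(k-1)} * a : a ∈ A} for k > 1, and the map A^k/A^{k+1} → A^{k+1}/A^{k+2}, a + A^{k+1} ↦ x*a + A^{k+2}, is a well-defined surjective homomorphism of abelian groups. -/
import Mathlib


/-- A skew (left) brace structure on an additive group `(A,+)`: a second group
operation `mul` (with inverse `inv`) sharing the identity `0`, satisfying
`a ∘ (b + c) = a ∘ b - a + a ∘ c`. -/
structure SkewBrace (A : Type*) [AddGroup A] where
  mul : A → A → A
  inv : A → A
  mul_assoc : ∀ a b c, mul (mul a b) c = mul a (mul b c)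
  zero_mul : ∀ a, mul 0 a = a
  mul_zero : ∀ a, mul a 0 = a
  inv_mul : ∀ a, mul (inv a) a = 0
  left_compat : ∀ a b c, mul a (b + c) = mul a b + -a + mul a c

/-- The star operation `a * b = -a + a∘b - b` of a skew brace. -/
def star {A : Type*} [AddGroup A] (S : SkewBrace A) (a b : A) : A :=
  -a + S.mul a b - b

/-- The left series of a skew brace: `lpow S 0 = A^1 = A` and
`lpow S n = A^{n+1} = A * A^n`. -/
def lpow {A : Type*} [AddGroup A] (S : SkewBrace A) : ℕ → AddSubgroup A
  | 0 => ⊤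
  | n + 1 => AddSubgroup.closure {z | ∃ a : A, ∃ b ∈ lpow S n, z = star S a b}

/-- `spow S x n` is the `(n+1)`-st `*`-power `x^{*(n+1)}` of `x`. -/
def spow {A : Type*} [AddGroup A] (S : SkewBrace A) (x : A) : ℕ → A
  | 0 => x
  | n + 1 => star S x (spow S x n)

section Aux
variable {A : Type*} [AddCommGroup A] (S : SkewBrace A)

lemma sb_mul_neg (a b : A) : S.mul a (-b) = a + a - S.mul a b := by
  have h := S.left_compat a b (-b)
  rw [add_neg_cancel, S.mul_zero] at h
  have h2 : S.mul a (-b) = (S.mul a b + -a + S.mul a (-b)) - (S.mul a b + -a) := by abel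
  rw [h2, ← h]; abel

lemma star_add_right (a b c : A) : star S a (b + c) = star S a b + star S a c := by
  unfold _root_.star; rw [S.left_compat]; abel

lemma star_zero_right (a : A) : star S a 0 = 0 := by
  unfold _root_.star; rw [S.mul_zero]; abel

lemma star_zero_left (a : A) : star S 0 a = 0 := by
  unfold _root_.star; rw [S.zero_mul]; abel

lemma star_neg_right (a b : A) : star S a (-b) = -star S a b := by
  have h := star_add_right S a b (-b)
  rw [add_neg_cancel, star_zero_right] at h
  exact eq_neg_of_add_eq_zero_right h.symm

lemma star_sub_right (a b c : A) : star S a (b - c) = star S a b - star S a c := by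
  rw [sub_eq_add_neg, star_add_right, star_neg_right, sub_eq_add_neg]



lemma star_comm (hcomm : ∀ a b : A, S.mul a b = S.mul b a) (a b : A) : star S a b = star S b a := by
  unfold _root_.star; rw [hcomm]; abel

lemma mul_star (a b c : A) :
    S.mul a (star S b c) = a + a - S.mul a b - S.mul a c + S.mul a (S.mul b c) := by
  unfold _root_.star
  rw [show -b + S.mul b c - c = -b + (S.mul b c + -c) by abel, S.left_compat,
    S.left_compat, sb_mul_neg, sb_mul_neg]
  abel

lemma star_assoc (hcomm : ∀ a b : A, S.mul a b = S.mul b a) (a b c : A) : star S (star S a b) c = star S a (star S b c) := by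
  rw [show star S (star S a b) c = -(star S a b) + S.mul (star S a b) c - c from rfl,
    hcomm (star S a b) c, mul_star S c a b,
    hcomm c a, hcomm c b, hcomm c (S.mul a b), S.mul_assoc,
    show star S a (star S b c) = -a + S.mul a (star S b c) - star S b c from rfl,
    mul_star S a b c]
  unfold _root_.star; abel


end Aux
section Aux2
variable {A : Type*} [AddCommGroup A] (S : SkewBrace A)

lemma star_swap (hcomm : ∀ a b : A, S.mul a b = S.mul b a) (u v c : A) :
    star S u (star S v c) = star S v (star S u c) := by
  rw [← star_assoc S hcomm, star_comm S hcomm u v, star_assoc S hcomm]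

lemma sb_mul_eq (a b : A) : S.mul a b = a + b + star S a b := by
  unfold _root_.star; abel

lemma sb_key (hcomm : ∀ a b : A, S.mul a b = S.mul b a) (x : A)
    (hgen : ∀ T : Set A, (0 : A) ∈ T →
      (∀ a ∈ T, ∀ b ∈ T, a + b ∈ T) → (∀ a ∈ T, -a ∈ T) →
      (∀ a ∈ T, ∀ b ∈ T, S.mul a b ∈ T) → (∀ a ∈ T, S.inv a ∈ T) →
      x ∈ T → T = Set.univ) :
    ∀ a b : A, ∃ c : A, star S x c = star S a b := by
  have hTu := hgen {a | ∀ b, ∃ c, star S x c = star S a b} ?_ ?_ ?_ ?_ ?_ ?_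
  · intro a b
    exact (Set.eq_univ_iff_forall.mp hTu a) b
  · intro b
    exact ⟨0, by rw [star_zero_right, star_zero_left]⟩
  · intro a ha a' ha' b
    obtain ⟨c, hc⟩ := ha b
    obtain ⟨c', hc'⟩ := ha' b
    refine ⟨c + c', ?_⟩
    rw [star_add_right, hc, hc', star_comm S hcomm (a + a') b, star_add_right,
      star_comm S hcomm b a, star_comm S hcomm b a']
  · intro a ha b
    obtain ⟨c, hc⟩ := ha b
    refine ⟨-c, ?_⟩
    rw [star_neg_right, hc, star_comm S hcomm (-a) b, star_neg_right,
      star_comm S hcomm b a]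
  · intro a ha a' ha' b
    obtain ⟨c, hc⟩ := ha b
    obtain ⟨c', hc'⟩ := ha' b
    refine ⟨c + c' + star S a c', ?_⟩
    rw [star_add_right, star_add_right, hc, hc', sb_mul_eq,
      star_comm S hcomm (a + a' + star S a a') b, star_add_right, star_add_right,
      star_comm S hcomm b a, star_comm S hcomm b a',
      star_comm S hcomm b (star S a a'), star_assoc S hcomm, ← hc',
      star_swap S hcomm]
  · intro a ha b
    obtain ⟨c, hc⟩ := ha b
    have h0 : star S (S.mul (S.inv a) a) b = 0 := by rw [S.inv_mul, star_zero_left]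
    rw [sb_mul_eq, star_comm S hcomm (S.inv a + a + star S (S.inv a) a) b,
      star_add_right, star_add_right, star_comm S hcomm b (S.inv a),
      star_comm S hcomm b a, star_comm S hcomm b (star S (S.inv a) a)] at h0
    refine ⟨-c - star S (S.inv a) c, ?_⟩
    rw [star_sub_right, star_neg_right, hc, star_swap S hcomm x (S.inv a) c, hc,
      ← star_assoc S hcomm]
    have h1 : star S (S.inv a) b =
        (star S (S.inv a) b + star S a b + star S (star S (S.inv a) a) b)
          - star S a b - star S (star S (S.inv a) a) b := by abel
    rw [h1, h0]
    abel
  · intro b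
    exact ⟨b, rfl⟩

lemma lpow_succ_def (n : ℕ) :
    lpow S (n + 1) = AddSubgroup.closure {z | ∃ a : A, ∃ b ∈ lpow S n, z = star S a b} :=
  rfl

lemma mem_lpow_succ {b : A} (a : A) {n : ℕ} (hb : b ∈ lpow S n) :
    star S a b ∈ lpow S (n + 1) := by
  rw [lpow_succ_def]
  exact AddSubgroup.subset_closure ⟨a, b, hb, rfl⟩

lemma spow_mem (x : A) : ∀ n, spow S x n ∈ lpow S n
  | 0 => AddSubgroup.mem_top x
  | n + 1 => mem_lpow_succ S x (spow_mem x n)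

lemma star_spow_mem (hcomm : ∀ a b : A, S.mul a b = S.mul b a) (x : A) (n : ℕ) (a : A) :
    star S (spow S x n) a ∈ lpow S (n + 1) := by
  rw [star_comm S hcomm]
  exact mem_lpow_succ S a (spow_mem S x n)

/-- Left star-multiplication as an additive homomorphism. -/
def starHom (a : A) : A →+ A := AddMonoidHom.mk' (fun b => star S a b) (star_add_right S a)

lemma lpow_le_range (hcomm : ∀ a b : A, S.mul a b = S.mul b a) (x : A)
    (hgen : ∀ T : Set A, (0 : A) ∈ T →
      (∀ a ∈ T, ∀ b ∈ T, a + b ∈ T) → (∀ a ∈ T, -a ∈ T) →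
      (∀ a ∈ T, ∀ b ∈ T, S.mul a b ∈ T) → (∀ a ∈ T, S.inv a ∈ T) →
      x ∈ T → T = Set.univ) :
    ∀ n : ℕ, lpow S (n + 1) ≤ (starHom S (spow S x n)).range := by
  intro n
  induction n with
  | zero =>
    rw [lpow_succ_def]
    refine (AddSubgroup.closure_le _).mpr ?_
    rintro z ⟨a, b, hb, rfl⟩
    obtain ⟨c, hc⟩ := sb_key S hcomm x hgen a b
    exact ⟨c, hc⟩
  | succ n ih =>
    rw [lpow_succ_def]
    refine (AddSubgroup.closure_le _).mpr ?_
    rintro z ⟨a, b, hb, rfl⟩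
    obtain ⟨c, hc⟩ := ih hb
    have hc' : star S (spow S x n) c = b := hc
    obtain ⟨d, hd⟩ := sb_key S hcomm x hgen a c
    refine ⟨d, ?_⟩
    show star S (spow S x (n + 1)) d = star S a b
    rw [show spow S x (n + 1) = star S x (spow S x n) from rfl,
      star_comm S hcomm x (spow S x n), star_assoc S hcomm, hd,
      star_swap S hcomm (spow S x n) a c, hc']

end Aux2

/-- Let `A` be a brace with abelian multiplicative group generated as a brace
by `x`. Then for `k ≥ 2`, `A^k = {x^{*(k-1)} * a : a ∈ A}`, and for every
`k ≥ 1` the map `A^k/A^{k+1} → A^{k+1}/A^{k+2}`, `a + A^{k+1} ↦ x*a + A^{k+2}`,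
is a well-defined surjective homomorphism of abelian groups (stated here via
coset conditions, with `A^k = lpow S (k-1)`). -/
theorem stmt_11 {A : Type*} [AddCommGroup A] (S : SkewBrace A)
    (hcomm : ∀ a b : A, S.mul a b = S.mul b a) (x : A)
    (hgen : ∀ T : Set A, (0 : A) ∈ T →
      (∀ a ∈ T, ∀ b ∈ T, a + b ∈ T) → (∀ a ∈ T, -a ∈ T) →
      (∀ a ∈ T, ∀ b ∈ T, S.mul a b ∈ T) → (∀ a ∈ T, S.inv a ∈ T) →
      x ∈ T → T = Set.univ) :
    (∀ j : ℕ, 1 ≤ j →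
      (lpow S j : Set A) = Set.range (fun a => star S (spow S x (j - 1)) a)) ∧
    (∀ k : ℕ,
      (∀ a ∈ lpow S k, star S x a ∈ lpow S (k + 1)) ∧
      (∀ a ∈ lpow S k, ∀ b ∈ lpow S k, a - b ∈ lpow S (k + 1) →
        star S x a - star S x b ∈ lpow S (k + 2)) ∧
      (∀ a ∈ lpow S k, ∀ b ∈ lpow S k,
        star S x (a + b) - (star S x a + star S x b) ∈ lpow S (k + 2)) ∧
      (∀ c ∈ lpow S (k + 1), ∃ a ∈ lpow S k, c - star S x a ∈ lpow S (k + 2))) := by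
  constructor
  · intro j hj
    cases j with
    | zero => exact (Nat.not_succ_le_zero 0 hj).elim
    | succ m =>
      simp only [Nat.add_sub_cancel]
      ext z
      simp only [SetLike.mem_coe, Set.mem_range]
      constructor
      · intro hz
        obtain ⟨c, hc⟩ := lpow_le_range S hcomm x hgen m hz
        exact ⟨c, hc⟩
      · rintro ⟨a, rfl⟩
        exact star_spow_mem S hcomm x m a
  · intro k
    refine ⟨?_, ?_, ?_, ?_⟩
    · intro a ha
      exact mem_lpow_succ S x ha
    · intro a _ b _ hab
      rw [← star_sub_right]
      exact mem_lpow_succ S x hab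
    · intro a _ b _
      rw [star_add_right, sub_self]
      exact (lpow S (k + 2)).zero_mem
    · intro c hc
      cases k with
      | zero =>
        obtain ⟨a, ha⟩ := lpow_le_range S hcomm x hgen 0 hc
        refine ⟨a, AddSubgroup.mem_top a, ?_⟩
        rw [show star S x a = c from ha, sub_self]
        exact (lpow S 2).zero_mem
      | succ m =>
        obtain ⟨d, hd⟩ := lpow_le_range S hcomm x hgen (m + 1) hc
        have hd' : star S x (star S (spow S x m) d) = c :=
          (star_assoc S hcomm x (spow S x m) d).symm.trans hd
        refine ⟨star S (spow S x m) d, star_spow_mem S hcomm x m d, ?_⟩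
        rw [hd', sub_self]
        exact (lpow S (m + 1 + 2)).zero_mem
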